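/- Let G = ⟨a, b | a^m = b^n = 1, b⁻¹ab = a^r⟩ be nonabelian with gcd(m,n) = 1 (m, n odd), r^n ≡ 1 (mod m), and suppose G is not the direct product of two nontrivial subgroups. Then gcd(r − 1, m) = 1, the intersection ⟨a⟩ ∩ Z(G) is trivial, and for every integer i and every j with gcd(j, n) = 1, the element a^i b^j has order exactly n. -/

import Mathlib

private lemma aux_mem_normalizer_of_conj {G : Type*} [Group G] {H : Subgroup G} {g : G}
    (h1 : ∀ x ∈ H, g * x * g⁻¹ ∈ H) (h2 : ∀ x ∈ H, g⁻¹ * x * g ∈ H) :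
    g ∈ Subgroup.normalizer (H : Set G) := by
  rw [Subgroup.mem_normalizer_iff]
  intro h
  constructor
  · exact fun hh => h1 h hh
  · intro hh
    have := h2 _ hh
    rwa [show g⁻¹ * (g * h * g⁻¹) * g = h by group] at this

private lemma aux_normal_of_conj_gen {G : Type*} [Group G] {s : Set G}
    (hs : Subgroup.closure s = ⊤) {H : Subgroup G}
    (h : ∀ g ∈ s, (∀ x ∈ H, g * x * g⁻¹ ∈ H) ∧ (∀ x ∈ H, g⁻¹ * x * g ∈ H)) : H.Normal := by
  rw [← Subgroup.normalizer_eq_top_iff, ← top_le_iff, ← hs]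
  refine (Subgroup.closure_le _).mpr ?_
  intro g hg
  exact aux_mem_normalizer_of_conj (h g hg).1 (h g hg).2

private lemma aux_conj_mem_closure {G : Type*} [Group G] {s : Set G} {g : G}
    (h : ∀ x ∈ s, g * x * g⁻¹ ∈ Subgroup.closure s) :
    ∀ x ∈ Subgroup.closure s, g * x * g⁻¹ ∈ Subgroup.closure s := by
  intro x hx
  have hmap : Subgroup.map (MulAut.conj g).toMonoidHom (Subgroup.closure s) ≤
      Subgroup.closure s := by
    rw [MonoidHom.map_closure]
    refine (Subgroup.closure_le _).mpr ?_
    rintro _ ⟨y, hy, rfl⟩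
    simpa using h y hy
  have : g * x * g⁻¹ ∈ Subgroup.map (MulAut.conj g).toMonoidHom (Subgroup.closure s) :=
    ⟨x, hx, by simp⟩
  exact hmap this

private lemma aux_geom_dvd {m s n : ℕ} (hs : 1 ≤ s) (hco : Nat.Coprime (s - 1) m)
    (hdvd : m ∣ s ^ n - 1) : m ∣ ∑ t ∈ Finset.range n, s ^ t := by
  have hsn : 1 ≤ s ^ n := Nat.one_le_pow _ _ hs
  have hkey : (∑ t ∈ Finset.range n, s ^ t) * (s - 1) = s ^ n - 1 := by
    zify [hs, hsn]
    push_cast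
    exact geom_sum_mul _ n
  have hd2 : m ∣ (∑ t ∈ Finset.range n, s ^ t) * (s - 1) := hkey ▸ hdvd
  exact (Nat.Coprime.dvd_of_dvd_mul_right (Nat.Coprime.symm hco) hd2)

private lemma aux_lte {m n r p : ℕ} (hp : p.Prime) (hmodd : Odd m) (hcop : Nat.Coprime m n)
    (hr : 1 < r) (hn : 0 < n) (hmr : m ∣ r ^ n - 1) (hpm : p ∣ m) (hpr : p ∣ r - 1) :
    p ^ m.factorization p ∣ r - 1 := by
  have hp2 : p ≠ 2 := by
    rintro rfl
    obtain ⟨t, rfl⟩ := hpm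
    rcases hmodd with ⟨c, hc⟩
    omega
  have hodd : Odd p := hp.odd_of_ne_two hp2
  haveI : Fact p.Prime := ⟨hp⟩
  have hprn : ¬ p ∣ r := by
    intro h
    have h1 : p ∣ r - (r - 1) := Nat.dvd_sub h hpr
    have h2 : r - (r - 1) = 1 := by omega
    rw [h2] at h1
    have h3 := Nat.le_of_dvd one_pos h1
    have := hp.two_le
    omega
  have hval := padicValNat.pow_sub_pow hodd hr hpr hprn hn.ne'
  rw [one_pow] at hval
  have hpn0 : padicValNat p n = 0 := by
    apply padicValNat.eq_zero_of_not_dvd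
    intro h
    have hd := Nat.dvd_gcd hpm h
    rw [hcop] at hd
    have h3 := Nat.le_of_dvd one_pos hd
    have := hp.two_le
    omega
  have hrn1 : r ^ n - 1 ≠ 0 := Nat.sub_ne_zero_of_lt (Nat.one_lt_pow hn.ne' hr)
  have h1 : m.factorization p ≤ (r ^ n - 1).factorization p :=
    (Nat.Prime.pow_dvd_iff_le_factorization hp hrn1).mp ((Nat.ordProj_dvd m p).trans hmr)
  rw [Nat.factorization_def _ hp, Nat.factorization_def _ hp, hval, hpn0, add_zero] at h1
  refine (Nat.Prime.pow_dvd_iff_le_factorization hp (by omega)).mpr ?_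
  rwa [Nat.factorization_def _ hp, Nat.factorization_def _ hp]

private lemma aux_gcd_cop {m n r : ℕ} (hm : 0 < m) (hmodd : Odd m) (hcop : Nat.Coprime m n)
    (hr : 1 < r) (hn : 0 < n) (hmr : m ∣ r ^ n - 1) :
    Nat.Coprime (Nat.gcd (r - 1) m) (m / Nat.gcd (r - 1) m) := by
  set d := Nat.gcd (r - 1) m with hd
  have hdm : d ∣ m := Nat.gcd_dvd_right _ _
  have hd0 : d ≠ 0 := fun h => by
    have := Nat.eq_zero_of_gcd_eq_zero_right (hd ▸ h)
    omega
  have hq0 : m / d ≠ 0 := fun h => by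
    have := Nat.div_mul_cancel hdm
    rw [h] at this
    omega
  by_contra hcon
  obtain ⟨p, hp, hpd⟩ := Nat.exists_prime_and_dvd hcon
  have hpd1 : p ∣ d := hpd.trans (Nat.gcd_dvd_left _ _)
  have hpd2 : p ∣ m / d := hpd.trans (Nat.gcd_dvd_right _ _)
  have hpr : p ∣ r - 1 := hpd1.trans (Nat.gcd_dvd_left _ _)
  have hpm : p ∣ m := hpd1.trans hdm
  have hkey := aux_lte hp hmodd hcop hr hn hmr hpm hpr
  have hpnud : p ^ m.factorization p ∣ d := Nat.dvd_gcd hkey (Nat.ordProj_dvd m p)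
  have h1 : m.factorization p ≤ d.factorization p :=
    (Nat.Prime.pow_dvd_iff_le_factorization hp hd0).mp hpnud
  have h2 : 1 ≤ (m / d).factorization p :=
    (Nat.Prime.pow_dvd_iff_le_factorization hp hq0).mp (by simpa using hpd2)
  have h3 : m.factorization p = d.factorization p + (m / d).factorization p := by
    conv_lhs => rw [← Nat.div_mul_cancel hdm, Nat.factorization_mul hq0 hd0]
    simp [add_comm]
  omega
theorem order_of_elements_in_indecomposable_sylow_cyclic
    {G : Type*} [Group G] [Finite G] (a b : G) (m n r : ℕ)
    (hm : orderOf a = m) (hn : orderOf b = n)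
    (hmodd : Odd m) (hnodd : Odd n)
    (hgen : Subgroup.closure ({a, b} : Set G) = ⊤)
    (hconj : b⁻¹ * a * b = a ^ r)
    (hcop : Nat.Coprime m n)
    (hrn : r ^ n ≡ 1 [MOD m])
    (hnonab : ∃ x y : G, x * y ≠ y * x)
    (hindec : ¬ ∃ H K : Subgroup G, H ≠ ⊥ ∧ K ≠ ⊥ ∧ H.Normal ∧ K.Normal ∧
        H ⊓ K = ⊥ ∧ H ⊔ K = ⊤) :
    Nat.gcd (r - 1) m = 1 ∧
    Subgroup.zpowers a ⊓ Subgroup.center G = ⊥ ∧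
    ∀ i j : ℕ, Nat.Coprime j n → orderOf (a ^ i * b ^ j) = n := by
  have hmpos : 0 < m := hm ▸ orderOf_pos a
  have hnpos : 0 < n := hn ▸ orderOf_pos b
  -- a and b do not commute
  have hab : a * b ≠ b * a := by
    intro h
    obtain ⟨x, y, hxy⟩ := hnonab
    apply hxy
    have hca : Subgroup.closure ({a, b} : Set G) ≤ Subgroup.centralizer {a} := by
      refine (Subgroup.closure_le _).mpr ?_
      intro z hz
      rcases hz with hz | hz
      · refine Subgroup.mem_centralizer_iff.mpr ?_
        rintro _ rfl
        rw [hz]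
      · rw [Set.mem_singleton_iff] at hz
        refine Subgroup.mem_centralizer_iff.mpr ?_
        rintro _ rfl
        rw [hz]
        exact h
    have hcb : Subgroup.closure ({a, b} : Set G) ≤ Subgroup.centralizer {b} := by
      refine (Subgroup.closure_le _).mpr ?_
      intro z hz
      rcases hz with hz | hz
      · refine Subgroup.mem_centralizer_iff.mpr ?_
        rintro _ rfl
        rw [hz]
        exact h.symm
      · rw [Set.mem_singleton_iff] at hz
        refine Subgroup.mem_centralizer_iff.mpr ?_
        rintro _ rfl
        rw [hz]
    have hx : ∀ w ∈ Subgroup.closure ({a, b} : Set G), a * w = w * a := by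
      intro w hw
      have := hca hw
      rw [Subgroup.mem_centralizer_iff] at this
      exact this a rfl
    have hy2 : ∀ w ∈ Subgroup.closure ({a, b} : Set G), b * w = w * b := by
      intro w hw
      have := hcb hw
      rw [Subgroup.mem_centralizer_iff] at this
      exact this b rfl
    have hall : Subgroup.closure ({a, b} : Set G) ≤
        Subgroup.centralizer (Subgroup.closure ({a, b} : Set G) : Set G) := by
      refine (Subgroup.closure_le _).mpr ?_
      intro z hz
      refine Subgroup.mem_centralizer_iff.mpr ?_
      intro w hw
      rcases hz with hz | hz
      · rw [hz]
        exact (hx w hw).symm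
      · rw [Set.mem_singleton_iff] at hz
        rw [hz]
        exact (hy2 w hw).symm
    have hymem : y ∈ Subgroup.centralizer (Subgroup.closure ({a, b} : Set G) : Set G) :=
      hall (hgen ▸ Subgroup.mem_top y)
    rw [Subgroup.mem_centralizer_iff] at hymem
    exact hymem x (hgen ▸ Subgroup.mem_top x)
  have hane : a ≠ 1 := fun h => hab (by rw [h, one_mul, mul_one])
  have hbne : b ≠ 1 := fun h => hab (by rw [h, one_mul, mul_one])
  have hm1 : 1 < m := by
    rcases Nat.lt_or_ge 1 m with h | h
    · exact h
    · have hm1' : m = 1 := by omega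
      rw [hm1'] at hm
      exact absurd (orderOf_eq_one_iff.mp hm) hane
  have hn1 : 1 < n := by
    rcases Nat.lt_or_ge 1 n with h | h
    · exact h
    · have hn1' : n = 1 := by omega
      rw [hn1'] at hn
      exact absurd (orderOf_eq_one_iff.mp hn) hbne
  have hr1 : 1 < r := by
    rcases Nat.lt_or_ge 1 r with h | h
    · exact h
    · have : r = 0 ∨ r = 1 := by omega
      rcases this with rfl | rfl
      · rw [pow_zero] at hconj
        have h2 : a = b * (b⁻¹ * a * b) * b⁻¹ := by group
        rw [hconj] at h2
        simp at h2
        exact absurd h2 hane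
      · rw [pow_one] at hconj
        have h2 : b * (b⁻¹ * a * b) = b * a := by rw [hconj]
        rw [show b * (b⁻¹ * a * b) = a * b by group] at h2
        exact absurd h2 hab
  have hbn : b ^ n = 1 := hn ▸ pow_orderOf_eq_one b
  have ham : a ^ m = 1 := hm ▸ pow_orderOf_eq_one a
  have hpow1 : ∀ t : ℕ, m ∣ t → a ^ t = 1 := fun t ht =>
    orderOf_dvd_iff_pow_eq_one.mp (hm ▸ ht)
  have hmdvd : m ∣ r ^ n - 1 :=
    (Nat.modEq_iff_dvd' (Nat.one_le_pow _ _ (by omega))).mp hrn.symm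
  have hconj1 : ∀ t : ℕ, b⁻¹ * a ^ t * b = a ^ (t * r) := by
    intro t
    have h1 : b⁻¹ * a ^ t * (b⁻¹)⁻¹ = (b⁻¹ * a * (b⁻¹)⁻¹) ^ t := (conj_pow).symm
    rw [inv_inv] at h1
    rw [h1, hconj, ← pow_mul, mul_comm r t]
  have hconjk : ∀ k t : ℕ, (b ^ k)⁻¹ * a ^ t * b ^ k = a ^ (t * r ^ k) := by
    intro k
    induction k with
    | zero => simp
    | succ k ih =>
      intro t
      have hstep : (b ^ (k + 1))⁻¹ * a ^ t * b ^ (k + 1)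
          = b⁻¹ * ((b ^ k)⁻¹ * a ^ t * b ^ k) * b := by
        rw [pow_succ]
        group
      rw [hstep, ih, hconj1, pow_succ, mul_assoc]
  have hconjB : ∀ k t : ℕ, b ^ k * a ^ t * (b ^ k)⁻¹ = a ^ (t * r ^ (k * (n - 1))) := by
    intro k t
    have h1 : b ^ (k * (n - 1)) * b ^ k = 1 := by
      rw [← pow_add]
      have he : k * (n - 1) + k = n * k := by
        have h0 : n - 1 + 1 = n := by omega
        calc k * (n - 1) + k = k * ((n - 1) + 1) := by ring
        _ = n * k := by rw [h0]; ring
      rw [he, pow_mul, hbn, one_pow]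
    have h2 : b ^ k = (b ^ (k * (n - 1)))⁻¹ := eq_inv_of_mul_eq_one_right h1
    rw [h2, inv_inv]
    exact hconjk (k * (n - 1)) t
  have hrm : Nat.Coprime r m := by
    have ha1 : Nat.gcd r m ∣ r ^ n := dvd_pow (Nat.gcd_dvd_left r m) (by omega)
    have ha2 : Nat.gcd r m ∣ r ^ n - 1 := (Nat.gcd_dvd_right r m).trans hmdvd
    have ha3 : Nat.gcd r m ∣ 1 := by
      have := Nat.dvd_sub ha1 ha2
      rwa [Nat.sub_sub_self (Nat.one_le_pow _ _ (by omega))] at this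
    exact Nat.eq_one_of_dvd_one ha3
  -- Part 1
  have h1 : Nat.gcd (r - 1) m = 1 := by
    by_contra hu
    set u := Nat.gcd (r - 1) m with hudef
    have hum : u ∣ m := Nat.gcd_dvd_right _ _
    have hur : u ∣ r - 1 := Nat.gcd_dvd_left _ _
    obtain ⟨c, hc⟩ := hur
    have hu0 : 0 < u := Nat.gcd_pos_of_pos_right _ hmpos
    have hrc : r = u * c + 1 := by omega
    set v := m / u with hvdef
    have huv : u * v = m := Nat.mul_div_cancel' hum
    have hv0 : 0 < v := by
      rcases Nat.eq_zero_or_pos v with h | h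
      · rw [h, mul_zero] at huv; omega
      · exact h
    have hvm : v ∣ m := ⟨u, by rw [← huv]; ring⟩
    have hcuv : Nat.Coprime u v := aux_gcd_cop hmpos hmodd hcop hr1 hnpos hmdvd
    have hu1 : 1 < u := by omega
    have hmv : m / v = u := Nat.div_eq_of_eq_mul_left hv0 (by rw [← huv])
    have hov : orderOf (a ^ v) = u := by
      rw [orderOf_pow, hm, Nat.gcd_eq_right hvm]
      omega
    have hou : orderOf (a ^ u) = v := by
      rw [orderOf_pow, hm, Nat.gcd_eq_right hum]
    -- the subgroups
    set H := Subgroup.zpowers (a ^ v) with hH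
    set N := Subgroup.zpowers (a ^ u) with hN
    set B := Subgroup.zpowers b with hB
    set K := N ⊔ B with hK
    -- a^v is central
    have hvcomm : a ^ v * b = b * a ^ v := by
      have hc1 : b⁻¹ * a ^ v * b = a ^ (v * r) := hconj1 v
      have hc2 : a ^ (v * r) = a ^ v := by
        rw [hrc]
        have he : v * (u * c + 1) = m * c + v := by rw [← huv]; ring
        rw [he, pow_add, pow_mul, ham, one_pow, one_mul]
      rw [hc2] at hc1
      calc a ^ v * b = b * (b⁻¹ * a ^ v * b) := by group
        _ = b * a ^ v := by rw [hc1]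
    have hcentv : a ^ v ∈ Subgroup.center G := by
      rw [Subgroup.mem_center_iff]
      intro g
      have hg : g ∈ Subgroup.centralizer {a ^ v} := by
        have hle : Subgroup.closure ({a, b} : Set G) ≤ Subgroup.centralizer {a ^ v} := by
          refine (Subgroup.closure_le _).mpr ?_
          intro z hz
          rcases hz with hz | hz
          · refine Subgroup.mem_centralizer_iff.mpr ?_
            rintro _ rfl
            rw [hz]
            exact ((Commute.refl a).pow_left v).eq
          · rw [Set.mem_singleton_iff] at hz
            refine Subgroup.mem_centralizer_iff.mpr ?_
            rintro _ rfl
            rw [hz]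
            exact hvcomm
        exact hle (hgen ▸ Subgroup.mem_top g)
      rw [Subgroup.mem_centralizer_iff] at hg
      exact (hg (a ^ v) rfl).symm
    have hHc : H ≤ Subgroup.center G := Subgroup.zpowers_le.mpr hcentv
    have hHnormal : H.Normal := by
      constructor
      intro x hx g
      have hx' := hHc hx
      rw [Subgroup.mem_center_iff] at hx'
      rw [hx' g, mul_assoc, mul_inv_cancel, mul_one]
      exact hx
    -- conjugation facts for N
    have hNconj1 : b⁻¹ * a ^ u * b ∈ N := by
      rw [hconj1 u, pow_mul]
      exact Subgroup.pow_mem _ (Subgroup.mem_zpowers _) r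
    have hNconj2 : b * a ^ u * b⁻¹ ∈ N := by
      have hcb := hconjB 1 u
      rw [pow_one] at hcb
      rw [hcb, pow_mul]
      exact Subgroup.pow_mem _ (Subgroup.mem_zpowers _) _
    have hNa : ∀ x ∈ N, Commute a x := by
      rintro x ⟨k, rfl⟩
      exact ((Commute.refl a).pow_right u).zpow_right k
    have hNnormal : N.Normal := by
      refine aux_normal_of_conj_gen hgen ?_
      intro g hg
      rcases hg with hg | hg
      · rcases hg.symm with rfl
        constructor
        · intro x hx
          rw [(hNa x hx).eq, mul_assoc, mul_inv_cancel, mul_one]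
          exact hx
        · intro x hx
          rw [((hNa x hx).inv_left).eq, mul_assoc, inv_mul_cancel, mul_one]
          exact hx
      · rw [Set.mem_singleton_iff] at hg
        rcases hg.symm with rfl
        constructor
        · rintro x ⟨k, rfl⟩
          have hc2 : b * (a ^ u) ^ k * b⁻¹ = (b * a ^ u * b⁻¹) ^ k := (conj_zpow).symm
          rw [hc2]
          exact Subgroup.zpow_mem _ hNconj2 k
        · rintro x ⟨k, rfl⟩
          have hc2 : b⁻¹ * (a ^ u) ^ k * (b⁻¹)⁻¹ = (b⁻¹ * a ^ u * (b⁻¹)⁻¹) ^ k := (conj_zpow).symm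
          rw [inv_inv] at hc2
          rw [hc2]
          exact Subgroup.zpow_mem _ hNconj1 k
    -- K as a closure
    have hKcl : K = Subgroup.closure {a ^ u, b} := by
      rw [hK, show ({a ^ u, b} : Set G) = {a ^ u} ∪ {b} from rfl, Subgroup.closure_union,
        hN, hB, Subgroup.zpowers_eq_closure, Subgroup.zpowers_eq_closure]
    have hbK : b ∈ K := Subgroup.mem_sup_right (Subgroup.mem_zpowers b)
    have hauK : a ^ u ∈ K := Subgroup.mem_sup_left (Subgroup.mem_zpowers _)
    have har1K : a ^ (r - 1) ∈ K := by
      have he : a ^ (r - 1) = (a ^ u) ^ c := by rw [← pow_mul, hc]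
      rw [he]
      exact Subgroup.pow_mem _ hauK c
    have hab2 : a * b = b * a ^ r := by
      calc a * b = b * (b⁻¹ * a * b) := by group
        _ = b * a ^ r := by rw [hconj]
    have hrsplit : a ^ r = a ^ (r - 1) * a := by
      rw [← pow_succ]
      congr 1
      omega
    have habK1 : a * b * a⁻¹ = b * a ^ (r - 1) := by
      rw [hab2, hrsplit, mul_assoc, mul_assoc, mul_inv_cancel, mul_one]
    have habK2 : a⁻¹ * b * a = b * (a ^ (r - 1))⁻¹ := by
      have h4 : a⁻¹ * (a * b) * (a ^ (r - 1))⁻¹ = b * (a ^ (r - 1))⁻¹ := by group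
      rw [hab2, hrsplit] at h4
      rw [← h4]
      group
    have hgenK : ∀ g : G, g * a ^ u * g⁻¹ ∈ K → g * b * g⁻¹ ∈ K →
        ∀ x ∈ K, g * x * g⁻¹ ∈ K := by
      intro g hg1 hg2 x hx
      rw [hKcl] at hg1 hg2 ⊢
      rw [hKcl] at hx
      refine aux_conj_mem_closure ?_ x hx
      intro y hy
      rcases hy with hy | hy
      · rw [hy]; exact hg1
      · rw [Set.mem_singleton_iff] at hy; rw [hy]; exact hg2
    have hKcA : ∀ x ∈ K, a * x * a⁻¹ ∈ K := by
      refine hgenK a ?_ ?_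
      · rw [(hNa _ (Subgroup.mem_zpowers _)).eq, mul_assoc, mul_inv_cancel, mul_one]
        exact hauK
      · rw [habK1]
        exact Subgroup.mul_mem _ hbK har1K
    have hKcA' : ∀ x ∈ K, a⁻¹ * x * a ∈ K := by
      intro x hx
      have h5 : a⁻¹ * x * (a⁻¹)⁻¹ ∈ K := by
        refine hgenK a⁻¹ ?_ ?_ x hx
        · rw [inv_inv, ((hNa _ (Subgroup.mem_zpowers _)).inv_left).eq, mul_assoc, inv_mul_cancel,
            mul_one]
          exact hauK
        · rw [inv_inv, habK2]
          exact Subgroup.mul_mem _ hbK (Subgroup.inv_mem _ har1K)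
      rwa [inv_inv] at h5
    have hKcB : ∀ x ∈ K, b * x * b⁻¹ ∈ K := by
      refine hgenK b ?_ ?_
      · exact Subgroup.mem_sup_left hNconj2
      · rw [show b * b * b⁻¹ = b by group]
        exact hbK
    have hKcB' : ∀ x ∈ K, b⁻¹ * x * b ∈ K := by
      intro x hx
      have h5 : b⁻¹ * x * (b⁻¹)⁻¹ ∈ K := by
        refine hgenK b⁻¹ ?_ ?_ x hx
        · rw [inv_inv]
          exact Subgroup.mem_sup_left hNconj1
        · rw [inv_inv, show b⁻¹ * b * b = b by group]
          exact hbK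
      rwa [inv_inv] at h5
    have hKnormal : K.Normal := by
      refine aux_normal_of_conj_gen hgen ?_
      intro g hg
      rcases hg with hg | hg
      · rw [hg]
        exact ⟨hKcA, hKcA'⟩
      · rw [Set.mem_singleton_iff] at hg
        rw [hg]
        exact ⟨hKcB, hKcB'⟩
    -- nontriviality
    have hHne : H ≠ ⊥ := by
      intro h
      have hmem : a ^ v ∈ H := Subgroup.mem_zpowers _
      rw [h, Subgroup.mem_bot] at hmem
      rw [hmem, orderOf_one] at hov
      omega
    have hKne : K ≠ ⊥ := by
      intro h
      have hmem := hbK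
      rw [h, Subgroup.mem_bot] at hmem
      exact hbne hmem
    -- intersection
    have hNle : N ≤ Subgroup.zpowers a :=
      Subgroup.zpowers_le.mpr (Subgroup.pow_mem _ (Subgroup.mem_zpowers a) u)
    have hHle : H ≤ Subgroup.zpowers a :=
      Subgroup.zpowers_le.mpr (Subgroup.pow_mem _ (Subgroup.mem_zpowers a) v)
    have hinf : H ⊓ K = ⊥ := by
      rw [eq_bot_iff]
      intro x hx
      rw [Subgroup.mem_inf] at hx
      obtain ⟨hxH, hxK⟩ := hx
      haveI := hNnormal
      have hxK' : x ∈ (↑(N ⊔ B) : Set G) := hxK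
      rw [Subgroup.normal_mul, Set.mem_mul] at hxK'
      obtain ⟨y, hy, z, hz, hyz⟩ := hxK'
      have hza : z ∈ Subgroup.zpowers a := by
        have he : z = y⁻¹ * x := by rw [← hyz]; group
        rw [he]
        exact Subgroup.mul_mem _ (Subgroup.inv_mem _ (hNle hy)) (hHle hxH)
      have hz1 : z = 1 := by
        have hd1 : orderOf z ∣ m := hm ▸ orderOf_dvd_of_mem_zpowers hza
        have hd2 : orderOf z ∣ n := hn ▸ orderOf_dvd_of_mem_zpowers hz
        have hd3 : orderOf z ∣ 1 := hcop ▸ Nat.dvd_gcd hd1 hd2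
        rw [Nat.dvd_one] at hd3
        exact orderOf_eq_one_iff.mp hd3
      have hxy : x = y := by rw [← hyz, hz1, mul_one]
      have hd1 : orderOf x ∣ u := hov ▸ orderOf_dvd_of_mem_zpowers hxH
      have hd2 : orderOf x ∣ v := hou ▸ orderOf_dvd_of_mem_zpowers (hxy ▸ hy : x ∈ N)
      have hd3 : orderOf x ∣ 1 := hcuv ▸ Nat.dvd_gcd hd1 hd2
      rw [Nat.dvd_one] at hd3
      rw [Subgroup.mem_bot]
      exact orderOf_eq_one_iff.mp hd3
    -- join
    have hsup : H ⊔ K = ⊤ := by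
      rw [← top_le_iff, ← hgen]
      refine (Subgroup.closure_le _).mpr ?_
      intro z hz
      rcases hz with hz | hz
      · rw [hz]
        have hbez := Nat.gcd_eq_gcd_ab u v
        rw [hcuv] at hbez
        have ha' : a = (a ^ u) ^ (Nat.gcdA u v) * (a ^ v) ^ (Nat.gcdB u v) := by
          conv_lhs => rw [← zpow_one a]
          rw [← zpow_natCast a u, ← zpow_natCast a v, ← zpow_mul, ← zpow_mul, ← zpow_add]
          have hexp : (1 : ℤ) = ↑u * Nat.gcdA u v + ↑v * Nat.gcdB u v := by
            exact_mod_cast hbez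
          rw [← hexp]
        rw [ha']
        exact Subgroup.mul_mem _
          (Subgroup.mem_sup_right (Subgroup.zpow_mem _ hauK _))
          (Subgroup.mem_sup_left (Subgroup.zpow_mem _ (Subgroup.mem_zpowers _) _))
      · rw [Set.mem_singleton_iff] at hz
        rw [hz]
        exact Subgroup.mem_sup_right hbK
    exact hindec ⟨H, K, hHne, hKne, hHnormal, hKnormal, hinf, hsup⟩

  refine ⟨h1, ?_, ?_⟩
  · -- Part 2
    rw [eq_bot_iff]
    intro x hx
    rw [Subgroup.mem_inf] at hx
    obtain ⟨hxa, hxc⟩ := hx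
    rw [Subgroup.mem_zpowers_iff] at hxa
    obtain ⟨k, rfl⟩ := hxa
    rw [Subgroup.mem_center_iff] at hxc
    have hc1 : b⁻¹ * a ^ k * b = a ^ k := by
      rw [hxc b⁻¹, mul_assoc, inv_mul_cancel, mul_one]
    have hc2 : b⁻¹ * a ^ k * b = a ^ ((r : ℤ) * k) := by
      have h3 : b⁻¹ * a ^ k * (b⁻¹)⁻¹ = (b⁻¹ * a * (b⁻¹)⁻¹) ^ k := (conj_zpow).symm
      rw [inv_inv] at h3
      rw [h3, hconj, ← zpow_natCast a r, ← zpow_mul]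
    have heq : a ^ ((r : ℤ) * k) = a ^ k := by rw [← hc2, hc1]
    have hc3 : a ^ ((r : ℤ) * k - k) = 1 := by
      rw [zpow_sub, heq, mul_inv_cancel]
    have hdvd2 : ((m : ℤ)) ∣ (r : ℤ) * k - k := by
      have h4 := orderOf_dvd_iff_zpow_eq_one.mpr hc3
      rwa [hm] at h4
    have hfac : (r : ℤ) * k - k = ((r - 1 : ℕ) : ℤ) * k := by
      rw [Nat.cast_sub (by omega : 1 ≤ r)]
      push_cast
      ring
    rw [hfac] at hdvd2
    have hco : IsCoprime ((m : ℤ)) (((r - 1 : ℕ)) : ℤ) := by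
      rw [Nat.isCoprime_iff_coprime]
      exact Nat.coprime_comm.mp h1
    have hdvd3 : (m : ℤ) ∣ k := IsCoprime.dvd_of_dvd_mul_left hco hdvd2
    have hone : a ^ k = 1 := by
      apply orderOf_dvd_iff_zpow_eq_one.mp
      rwa [hm]
    rw [Subgroup.mem_bot]
    exact hone
  · -- Part 3
    intro i j hj
    have hrpos : 0 < r := by omega
    set s := r ^ (j * (n - 1)) with hsdef
    have hs1 : 1 ≤ s := Nat.one_le_pow _ _ hrpos
    have claim : ∀ k : ℕ, (a ^ i * b ^ j) ^ k
        = a ^ (i * ∑ t ∈ Finset.range k, s ^ t) * b ^ (j * k) := by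
      intro k
      induction k with
      | zero => simp
      | succ k ih =>
        rw [pow_succ, ih]
        have hcb := hconjB (j * k) i
        have hss : j * k * (n - 1) = j * (n - 1) * k := by ring
        rw [hss, show r ^ (j * (n - 1) * k) = s ^ k from by rw [pow_mul, ← hsdef]] at hcb
        have hmid : b ^ (j * k) * a ^ i = a ^ (i * s ^ k) * b ^ (j * k) := by
          calc b ^ (j * k) * a ^ i
              = (b ^ (j * k) * a ^ i * (b ^ (j * k))⁻¹) * b ^ (j * k) := by group
            _ = a ^ (i * s ^ k) * b ^ (j * k) := by rw [hcb]
        calc a ^ (i * ∑ t ∈ Finset.range k, s ^ t) * b ^ (j * k) * (a ^ i * b ^ j)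
            = a ^ (i * ∑ t ∈ Finset.range k, s ^ t) * (b ^ (j * k) * a ^ i) * b ^ j := by
              group
          _ = a ^ (i * ∑ t ∈ Finset.range k, s ^ t) * (a ^ (i * s ^ k) * b ^ (j * k)) * b ^ j := by
              rw [hmid]
          _ = (a ^ (i * ∑ t ∈ Finset.range k, s ^ t) * a ^ (i * s ^ k))
              * (b ^ (j * k) * b ^ j) := by group
          _ = a ^ (i * ∑ t ∈ Finset.range (k + 1), s ^ t) * b ^ (j * (k + 1)) := by
              rw [Finset.sum_range_succ, Nat.mul_succ, mul_add, pow_add, pow_add]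
    have hcosm : Nat.Coprime (s - 1) m := by
      by_contra hcon
      obtain ⟨p, hp, hpd⟩ := Nat.exists_prime_and_dvd hcon
      have hps : p ∣ s - 1 := hpd.trans (Nat.gcd_dvd_left _ _)
      have hpm : p ∣ m := hpd.trans (Nat.gcd_dvd_right _ _)
      have hrsp : (r : ZMod p) ^ (j * (n - 1)) = 1 := by
        have h2 : s ≡ 1 [MOD p] := ((Nat.modEq_iff_dvd' hs1).mpr hps).symm
        have h3 : ((s : ℕ) : ZMod p) = ((1 : ℕ) : ZMod p) :=
          (ZMod.natCast_eq_natCast_iff _ _ _).mpr h2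
        rw [hsdef] at h3
        push_cast at h3
        simpa using h3
      have hrnp : (r : ZMod p) ^ n = 1 := by
        have h2 : r ^ n ≡ 1 [MOD p] := hrn.of_dvd hpm
        have h3 := (ZMod.natCast_eq_natCast_iff _ _ _).mpr h2
        push_cast at h3
        simpa using h3
      have hc4 : Nat.Coprime (n - 1) n := by
        have h := Nat.dvd_sub (Nat.gcd_dvd_right (n - 1) n) (Nat.gcd_dvd_left (n - 1) n)
        have h5 : n - (n - 1) = 1 := by omega
        rw [h5] at h
        exact Nat.dvd_one.mp h
      have hcop2 : Nat.Coprime (j * (n - 1)) n := Nat.Coprime.mul hj hc4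
      have ho : orderOf ((r : ZMod p)) ∣ 1 := by
        have hd1 := orderOf_dvd_of_pow_eq_one hrsp
        have hd2 := orderOf_dvd_of_pow_eq_one hrnp
        exact hcop2 ▸ Nat.dvd_gcd hd1 hd2
      rw [Nat.dvd_one, orderOf_eq_one_iff] at ho
      have h6 : r ≡ 1 [MOD p] := by
        refine (ZMod.natCast_eq_natCast_iff r 1 p).mp ?_
        push_cast
        simpa using ho
      have h7 : p ∣ r - 1 := (Nat.modEq_iff_dvd' (by omega)).mp h6.symm
      have h8 : p ∣ 1 := h1 ▸ Nat.dvd_gcd h7 hpm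
      rw [Nat.dvd_one] at h8
      have := hp.one_lt
      omega
    have hsm : m ∣ s ^ n - 1 := by
      have h2 : s ^ n ≡ 1 [MOD m] := by
        have h3 : s ^ n = (r ^ n) ^ (j * (n - 1)) := by
          rw [hsdef, ← pow_mul, ← pow_mul]
          congr 1
          ring
        rw [h3]
        calc (r ^ n) ^ (j * (n - 1)) ≡ 1 ^ (j * (n - 1)) [MOD m] := hrn.pow _
          _ = 1 := one_pow _
      exact (Nat.modEq_iff_dvd' (Nat.one_le_pow _ _ (by omega))).mp h2.symm
    have hgeo : m ∣ ∑ t ∈ Finset.range n, s ^ t := aux_geom_dvd hs1 hcosm hsm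
    have hxn : (a ^ i * b ^ j) ^ n = 1 := by
      rw [claim n, hpow1 _ (Dvd.dvd.mul_left hgeo i), one_mul, mul_comm j n, pow_mul, hbn,
        one_pow]
    have hdn : orderOf (a ^ i * b ^ j) ∣ n := orderOf_dvd_of_pow_eq_one hxn
    have hnd : n ∣ orderOf (a ^ i * b ^ j) := by
      set k := orderOf (a ^ i * b ^ j) with hkdef
      have hk1 : (a ^ i * b ^ j) ^ k = 1 := pow_orderOf_eq_one _
      rw [claim k] at hk1
      have hbjk : b ^ (j * k) ∈ Subgroup.zpowers a := by
        have he : b ^ (j * k) = (a ^ (i * ∑ t ∈ Finset.range k, s ^ t))⁻¹ :=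
          eq_inv_of_mul_eq_one_right hk1
        rw [he]
        exact Subgroup.inv_mem _ (Subgroup.pow_mem _ (Subgroup.mem_zpowers a) _)
      have hb1 : b ^ (j * k) = 1 := by
        have hd1 : orderOf (b ^ (j * k)) ∣ m := hm ▸ orderOf_dvd_of_mem_zpowers hbjk
        have hd2 : orderOf (b ^ (j * k)) ∣ n :=
          hn ▸ orderOf_dvd_of_mem_zpowers (Subgroup.pow_mem _ (Subgroup.mem_zpowers b) _)
        have hd3 : orderOf (b ^ (j * k)) ∣ 1 := hcop ▸ Nat.dvd_gcd hd1 hd2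
        exact orderOf_eq_one_iff.mp (Nat.dvd_one.mp hd3)
      have hjk : n ∣ j * k := by
        have := orderOf_dvd_of_pow_eq_one hb1
        rwa [hn] at this
      exact hj.symm.dvd_of_dvd_mul_left hjk
    exact Nat.dvd_antisymm hdn hnd
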